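/- Let N ≥ 10 and let h ∈ C²((0,1]) ∩ L¹((0,1)) be nonnegative. Define Φ(r) = r^{2√(N−1)}(1 + ∫₀^r h) and define u_r(r) < 0 by Φ'(r) = (N−1) r^{N−3} u_r(r)². Then |u_r(r)| ≥ √2 (N−1)^{−1/4} r^{−N/2+√(N−1)+1} for all r ∈ (0,1], and since N ≥ 10 implies −N/2+√(N−1)+1 ≤ −1, the function u_r is not integrable on (0,1). -/

import Mathlib

open MeasureTheory Set intervalIntegral Topology Filter

/-- In the family construction, `|u_r(r)| ≥ √2 (N−1)^{−1/4} r^{−N/2+√(N−1)+1}`, the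
exponent `−N/2+√(N−1)+1` is `≤ −1` for `N ≥ 10`, and `u_r` is not integrable on `(0,1)`. -/
theorem ur_lower_bound_not_integrable (N : ℕ) (hN : 10 ≤ N) (h : ℝ → ℝ)
    (hC2 : ContDiffOn ℝ 2 h (Set.Ioc (0 : ℝ) 1))
    (hL1 : IntegrableOn h (Set.Ioo (0 : ℝ) 1))
    (hpos : ∀ s ∈ Set.Ioc (0 : ℝ) 1, 0 ≤ h s)
    (Φ Φ' : ℝ → ℝ)
    (hΦ : ∀ r ∈ Set.Ioc (0 : ℝ) 1,
      Φ r = r ^ (2 * Real.sqrt ((N : ℝ) - 1)) * (1 + ∫ s in (0 : ℝ)..r, h s))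
    (hΦ' : ∀ r ∈ Set.Ioc (0 : ℝ) 1, HasDerivWithinAt Φ (Φ' r) (Set.Ioc (0 : ℝ) 1) r)
    (u_r : ℝ → ℝ)
    (hu_rneg : ∀ r ∈ Set.Ioc (0 : ℝ) 1, u_r r < 0)
    (hu_rdef : ∀ r ∈ Set.Ioc (0 : ℝ) 1, Φ' r = ((N : ℝ) - 1) * r ^ (N - 3) * u_r r ^ 2) :
    (∀ r ∈ Set.Ioc (0 : ℝ) 1,
        Real.sqrt 2 * ((N : ℝ) - 1) ^ (-(1 : ℝ) / 4) *
          r ^ (-(N : ℝ) / 2 + Real.sqrt ((N : ℝ) - 1) + 1) ≤ |u_r r|) ∧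
      (-(N : ℝ) / 2 + Real.sqrt ((N : ℝ) - 1) + 1 ≤ -1) ∧
      ¬ IntegrableOn u_r (Set.Ioo (0 : ℝ) 1) := by
  have hN10 : (10 : ℝ) ≤ (N : ℝ) := by exact_mod_cast hN
  set s : ℝ := Real.sqrt ((N : ℝ) - 1) with hs_def
  have hN1 : (9 : ℝ) ≤ (N : ℝ) - 1 := by linarith
  have hs_sq : s ^ 2 = (N : ℝ) - 1 := Real.sq_sqrt (by linarith)
  have hs3 : 3 ≤ s := by
    have h9 : Real.sqrt 9 ≤ s := Real.sqrt_le_sqrt hN1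
    rwa [show (9:ℝ) = 3^2 by norm_num, Real.sqrt_sq (by norm_num)] at h9
  have hspos : 0 < s := by linarith
  set e : ℝ := -(N : ℝ) / 2 + s + 1 with he_def
  -- exponent bound
  have hexp : e ≤ -1 := by
    have hsle : s ≤ (N : ℝ) / 2 - 2 := by
      have h1 : (N : ℝ) - 1 ≤ ((N : ℝ)/2 - 2) ^ 2 := by nlinarith
      have h2 := Real.sqrt_le_sqrt h1
      rwa [Real.sqrt_sq (by linarith)] at h2
    simp only [he_def]; linarith
  set a : ℝ := 2 * s with ha_def
  set I : ℝ → ℝ := fun x => ∫ t in (0:ℝ)..x, h t with hI_def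
  have hint : ∀ x ∈ Set.Ioc (0:ℝ) 1, IntervalIntegrable h volume 0 x := by
    intro x hx
    rw [intervalIntegrable_iff_integrableOn_Ioo_of_le hx.1.le]
    exact hL1.mono_set (Set.Ioo_subset_Ioo le_rfl hx.2)
  have hInonneg : ∀ x ∈ Set.Ioc (0:ℝ) 1, 0 ≤ I x := by
    intro x hx
    simp only [hI_def]
    rw [intervalIntegral.integral_of_le hx.1.le]
    refine setIntegral_nonneg measurableSet_Ioc fun t ht => hpos t ⟨ht.1, ht.2.trans hx.2⟩
  have hImono : ∀ x ∈ Set.Ioc (0:ℝ) 1, ∀ y ∈ Set.Ioc (0:ℝ) 1, x ≤ y → I x ≤ I y := by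
    intro x hx y hy hxy
    have h1 : IntervalIntegrable h volume x y := (hint y hy).mono_set (by
      rw [Set.uIcc_of_le hxy, Set.uIcc_of_le hy.1.le]
      exact Set.Icc_subset_Icc hx.1.le le_rfl)
    have h2 : I x + ∫ t in x..y, h t = I y :=
      intervalIntegral.integral_add_adjacent_intervals (hint x hx) h1
    have h3 : 0 ≤ ∫ t in x..y, h t :=
      intervalIntegral.integral_nonneg hxy fun t ht => hpos t ⟨lt_of_lt_of_le hx.1 ht.1, ht.2.trans hy.2⟩
    linarith
  -- g = Φ - r^a is monotone on Ioc 0 1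
  set g : ℝ → ℝ := fun x => Φ x - x ^ a with hg_def
  have hg_eq : ∀ x ∈ Set.Ioc (0:ℝ) 1, g x = x ^ a * I x := by
    intro x hx
    simp only [hg_def, hΦ x hx]
    ring
  have hgmono : ∀ x ∈ Set.Ioc (0:ℝ) 1, ∀ y ∈ Set.Ioc (0:ℝ) 1, x ≤ y → g x ≤ g y := by
    intro x hx y hy hxy
    rw [hg_eq x hx, hg_eq y hy]
    have h1 : x ^ a ≤ y ^ a := Real.rpow_le_rpow hx.1.le hxy (by positivity)
    have h2 : I x ≤ I y := hImono x hx y hy hxy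
    have := hInonneg x hx
    nlinarith [Real.rpow_nonneg hx.1.le a]
  -- lower bound on Φ'
  have hΦ'lb : ∀ r ∈ Set.Ioc (0:ℝ) 1, a * r ^ (a - 1) ≤ Φ' r := by
    intro r hr
    have hd : HasDerivWithinAt g (Φ' r - a * r ^ (a - 1)) (Set.Ioc (0:ℝ) 1) r :=
      (hΦ' r hr).sub ((Real.hasDerivAt_rpow_const (Or.inl hr.1.ne')).hasDerivWithinAt)
    rw [hasDerivWithinAt_iff_tendsto_slope] at hd
    have hne : (𝓝[Set.Ioc (0:ℝ) 1 \ {r}] r).NeBot := by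
      have h1 : (𝓝[Set.Ioo (0:ℝ) r] r).NeBot := right_nhdsWithin_Ioo_neBot hr.1
      refine h1.mono (nhdsWithin_mono _ ?_)
      intro y hy
      exact ⟨⟨hy.1, hy.2.le.trans hr.2⟩, ne_of_lt hy.2⟩
    have hslope : ∀ᶠ y in 𝓝[Set.Ioc (0:ℝ) 1 \ {r}] r, 0 ≤ slope g r y := by
      filter_upwards [self_mem_nhdsWithin] with y hy
      rcases lt_or_gt_of_ne hy.2 with hlt | hgt
      · rw [slope_def_field]
        have := hgmono y hy.1 r hr hlt.le
        exact div_nonneg_of_nonpos (by linarith) (by linarith)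
      · rw [slope_def_field]
        have := hgmono r hr y hy.1 hgt.le
        exact div_nonneg (by linarith) (by linarith)
    have := ge_of_tendsto hd hslope
    linarith
  -- the pointwise bound
  have main : ∀ r ∈ Set.Ioc (0 : ℝ) 1,
      Real.sqrt 2 * ((N : ℝ) - 1) ^ (-(1 : ℝ) / 4) * r ^ e ≤ |u_r r| := by
    intro r hr
    have hrpos : 0 < r := hr.1
    have hpow : (r : ℝ) ^ (N - 3) = r ^ ((N : ℝ) - 3) := by
      rw [← Real.rpow_natCast r (N - 3)]
      congr 1
      rw [Nat.cast_sub (by omega)]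
      norm_num
    have hkey : 2 * s⁻¹ * r ^ (2 * e) ≤ u_r r ^ 2 := by
      have h1 : a * r ^ (a - 1) ≤ ((N : ℝ) - 1) * r ^ (N - 3) * u_r r ^ 2 := by
        rw [← hu_rdef r hr]; exact hΦ'lb r hr
      rw [hpow, ← hs_sq] at h1
      have h2 : r ^ (a - 1) = r ^ (2 * e) * r ^ ((N:ℝ) - 3) := by
        rw [← Real.rpow_add hrpos]
        congr 1
        simp only [he_def, ha_def]; ring
      rw [h2, ha_def] at h1
      have hrp : (0:ℝ) < r ^ ((N:ℝ) - 3) := Real.rpow_pos_of_pos hrpos _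
      have h3 : 2 * s * r ^ (2*e) ≤ s ^ 2 * u_r r ^ 2 := by
        have h1' : 2 * s * r ^ (2*e) * r ^ ((N:ℝ)-3) ≤ s ^ 2 * u_r r ^ 2 * r ^ ((N:ℝ)-3) := by
          nlinarith [h1]
        exact le_of_mul_le_mul_right h1' hrp
      have h4 : 2 * s⁻¹ * r ^ (2*e) = (2 * s * r ^ (2*e)) / s ^ 2 := by
        field_simp
      rw [h4, div_le_iff₀ (by positivity)]
      nlinarith [h3]
    have hceq : (Real.sqrt 2 * ((N : ℝ) - 1) ^ (-(1 : ℝ) / 4) * r ^ e) ^ 2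
        = 2 * s⁻¹ * r ^ (2 * e) := by
      have hsq : ∀ (b x : ℝ), 0 ≤ b → (b ^ x) ^ 2 = b ^ (2 * x) := by
        intro b x hb
        rw [← Real.rpow_natCast (b ^ x) 2, ← Real.rpow_mul hb]
        norm_num [mul_comm]
      have hinv : ((N:ℝ) - 1) ^ (2 * (-(1:ℝ)/4)) = s⁻¹ := by
        rw [show (2 * (-(1:ℝ)/4)) = -(1/2) by norm_num, Real.rpow_neg (by linarith),
          ← Real.sqrt_eq_rpow]
      rw [mul_pow, mul_pow, Real.sq_sqrt (by norm_num : (0:ℝ) ≤ 2),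
        hsq _ _ (by linarith : (0:ℝ) ≤ (N:ℝ) - 1), hsq _ _ hrpos.le, hinv]
    have hcnn : 0 ≤ Real.sqrt 2 * ((N : ℝ) - 1) ^ (-(1 : ℝ) / 4) * r ^ e := by
      have := Real.sqrt_nonneg 2
      have := Real.rpow_nonneg (by linarith : (0:ℝ) ≤ (N:ℝ) - 1) (-(1:ℝ)/4)
      have := Real.rpow_nonneg hrpos.le e
      positivity
    calc Real.sqrt 2 * ((N : ℝ) - 1) ^ (-(1 : ℝ) / 4) * r ^ e
        = Real.sqrt ((Real.sqrt 2 * ((N : ℝ) - 1) ^ (-(1 : ℝ) / 4) * r ^ e) ^ 2) :=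
          (Real.sqrt_sq hcnn).symm
      _ ≤ Real.sqrt (u_r r ^ 2) := Real.sqrt_le_sqrt (by rw [hceq]; exact hkey)
      _ = |u_r r| := Real.sqrt_sq_eq_abs _
  refine ⟨main, hexp, ?_⟩
  intro hIu
  set c : ℝ := Real.sqrt 2 * ((N : ℝ) - 1) ^ (-(1 : ℝ) / 4) with hc_def
  have hc : 0 < c :=
    mul_pos (Real.sqrt_pos.mpr two_pos) (Real.rpow_pos_of_pos (by linarith) _)
  have hf : IntegrableOn (fun r : ℝ => c * r ^ e) (Set.Ioo 0 1) := by
    refine Integrable.mono hIu ((measurable_const.mul (by fun_prop : Measurable fun r : ℝ => r ^ e)).aestronglyMeasurable) ?_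
    filter_upwards [ae_restrict_mem measurableSet_Ioo] with x hx
    rw [Real.norm_eq_abs, Real.norm_eq_abs,
      abs_of_nonneg (mul_nonneg hc.le (Real.rpow_nonneg hx.1.le _))]
    exact main x ⟨hx.1, hx.2.le⟩
  have hre : IntegrableOn (fun r : ℝ => r ^ e) (Set.Ioo 0 1) := by
    have h5 := hf.const_mul c⁻¹
    have heq : (fun x : ℝ => c⁻¹ * (c * x ^ e)) = fun x : ℝ => x ^ e := by
      funext x; rw [inv_mul_cancel_left₀ hc.ne']
    rwa [heq] at h5
  rw [integrableOn_Ioo_rpow_iff one_pos] at hre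
  linarith
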